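/- arXiv:1412.4589 — 2 statements merged into one kernel-verified Lean document; each statement's English description precedes it below -/
import Mathlib

section
/- With 𝔤, γ, and ad~ as above, the map ad~ : 𝔤 → cl(𝔤) is a Lie algebra homomorphism into cl(𝔤) with the commutator bracket: ad~([x,y]) = [ad~(x), ad~(y)] for all x, y ∈ 𝔤. -/
open CliffordAlgebra

/-- Let `𝔤 = L` be a finite-dimensional complex Lie algebra with a nondegenerate invariant
symmetric bilinear form `B`, `cl(𝔤)` the Clifford algebra of the associated quadratic form
(so that `γ(x)² = B(x,x)·1`), and `{x_k}` a basis with `B(x_k, x_j) = -δ_{kj}`.  With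
`ad~(x) = (1/4) Σ_k γ(x_k) γ([x, x_k])`, we have `ad~` is a Lie algebra homomorphism into `cl(𝔤)` with the commutator bracket: `ad~([x,y]) = [ad~(x), ad~(y)]`. -/
theorem adTilde_lieHom
    (L : Type*) [LieRing L] [LieAlgebra ℂ L] [Module.Finite ℂ L]
    (B : LinearMap.BilinForm ℂ L)
    (hsymm : ∀ x y : L, B x y = B y x)
    (hinv : ∀ x y z : L, B ⁅x, y⁆ z + B y ⁅x, z⁆ = 0)
    (hnd : B.Nondegenerate)
    (n : ℕ) (b : Module.Basis (Fin n) ℂ L)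
    (hb : ∀ k j : Fin n, B (b k) (b j) = if k = j then -1 else 0)
    (γ : L →ₗ[ℂ] CliffordAlgebra (LinearMap.BilinMap.toQuadraticMap B))
    (hγ : γ = CliffordAlgebra.ι (LinearMap.BilinMap.toQuadraticMap B))
    (adT : L → CliffordAlgebra (LinearMap.BilinMap.toQuadraticMap B))
    (hadT : ∀ x : L, adT x = (1/4 : ℂ) • ∑ k : Fin n, γ (b k) * γ ⁅x, b k⁆) :
    ∀ x y : L, adT ⁅x, y⁆ = adT x * adT y - adT y * adT x := by
  intro x y
  -- pairing with all basis vectors detects zero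
  have hzero : ∀ w : L, (∀ j : Fin n, B w (b j) = 0) → w = 0 := by
    intro w hw
    apply hnd.1
    intro u
    have hu : u = ∑ j : Fin n, b.repr u j • b j := (b.sum_repr u).symm
    rw [hu, map_sum]
    simp [hw]
  -- expansion in the basis
  have hexpand : ∀ v : L, ∑ k : Fin n, B v (b k) • b k = -v := by
    intro v
    have h0 : ∀ j : Fin n, B (∑ k : Fin n, B v (b k) • b k + v) (b j) = 0 := by
      intro j
      rw [map_add, map_sum, LinearMap.add_apply]
      simp [hb, Finset.sum_ite_eq', smul_eq_mul, mul_ite]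
    have h1 := hzero _ h0
    exact eq_neg_of_add_eq_zero_left h1
  -- anticommutation relation
  have hpolar : ∀ u v : L, γ u * γ v + γ v * γ u
      = algebraMap ℂ (CliffordAlgebra (LinearMap.BilinMap.toQuadraticMap B)) (2 * B u v) := by
    intro u v
    rw [hγ, CliffordAlgebra.ι_mul_ι_add_swap, LinearMap.BilinMap.polar_toQuadraticMap,
      hsymm v u, two_mul]
  -- commutator of a quadratic element with a linear element
  have key : ∀ a c z : L, γ a * γ c * γ z - γ z * (γ a * γ c)
      = (2 * B c z) • γ a - (2 * B a z) • γ c := by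
    intro a c z
    have h1 : γ c * γ z = algebraMap ℂ _ (2 * B c z) - γ z * γ c :=
      eq_sub_of_add_eq (hpolar c z)
    have h2 : γ a * γ z = algebraMap ℂ _ (2 * B a z) - γ z * γ a :=
      eq_sub_of_add_eq (hpolar a z)
    rw [mul_assoc, h1, mul_sub, ← mul_assoc, h2, sub_mul, ← Algebra.commutes (2 * B c z) (γ a),
      Algebra.smul_def, Algebra.smul_def]
    noncomm_ring
  have hlie : ∀ (w : L) (f : Fin n → ℂ) (v : Fin n → L),
      ⁅w, (∑ k : Fin n, f k • v k : L)⁆ = ∑ k : Fin n, f k • ⁅w, v k⁆ := by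
    intro w f v
    rw [← LieAlgebra.ad_apply (R := ℂ) (L := L) w (∑ k : Fin n, f k • v k), map_sum]
    simp [LieAlgebra.ad_apply, lie_smul]
  -- the inner `L`-valued sum
  have hinner : ∀ w z : L,
      ∑ k : Fin n, ((2 * B ⁅w, b k⁆ z) • b k - (2 * B (b k) z) • ⁅w, b k⁆) = (4 : ℂ) • ⁅w, z⁆ := by
    intro w z
    have e1 : ∀ k : Fin n, B ⁅w, b k⁆ z = -(B ⁅w, z⁆ (b k)) := by
      intro k
      linear_combination (hinv w (b k) z) - (hsymm (b k) ⁅w, z⁆)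
    have h3 : ∑ k : Fin n, B z (b k) • ⁅w, b k⁆ = -⁅w, z⁆ := by
      have h3' : ⁅w, (∑ k : Fin n, B z (b k) • b k : L)⁆ = ∑ k : Fin n, B z (b k) • ⁅w, b k⁆ := by
        exact hlie w _ _
      rw [← h3', hexpand, lie_neg]
    have h4 : ∑ k : Fin n, B ⁅w, z⁆ (b k) • b k = -⁅w, z⁆ := hexpand _
    calc ∑ k : Fin n, ((2 * B ⁅w, b k⁆ z) • b k - (2 * B (b k) z) • ⁅w, b k⁆)
        = ∑ k : Fin n, ((-2 : ℂ) • (B ⁅w, z⁆ (b k) • b k) - (2 : ℂ) • (B z (b k) • ⁅w, b k⁆)) := by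
          refine Finset.sum_congr rfl fun k _ => ?_
          rw [e1, hsymm (b k) z, smul_smul, smul_smul]
          module
      _ = (-2 : ℂ) • (∑ k : Fin n, B ⁅w, z⁆ (b k) • b k)
            - (2 : ℂ) • (∑ k : Fin n, B z (b k) • ⁅w, b k⁆) := by
          rw [Finset.sum_sub_distrib, Finset.smul_sum, Finset.smul_sum]
      _ = (4 : ℂ) • ⁅w, z⁆ := by rw [h3, h4]; module
  -- adT implements the adjoint action
  have hcomm1 : ∀ w z : L, adT w * γ z - γ z * adT w = γ ⁅w, z⁆ := by
    intro w z
    rw [hadT w, smul_mul_assoc, mul_smul_comm, ← smul_sub, Finset.sum_mul, Finset.mul_sum,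
      ← Finset.sum_sub_distrib]
    simp_rw [key]
    rw [show (∑ k : Fin n, ((2 * B ⁅w, b k⁆ z) • γ (b k) - (2 * B (b k) z) • γ ⁅w, b k⁆))
        = γ (∑ k : Fin n, ((2 * B ⁅w, b k⁆ z) • b k - (2 * B (b k) z) • ⁅w, b k⁆)) by
      rw [map_sum]
      exact Finset.sum_congr rfl fun k _ => by rw [map_sub, map_smul, map_smul]]
    rw [hinner w z, map_smul, smul_smul]
    norm_num
  -- reshuffling of the double sum
  have hswap : ∑ k : Fin n, γ ⁅x, b k⁆ * γ ⁅y, b k⁆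
      = -∑ k : Fin n, γ (b k) * γ ⁅y, ⁅x, b k⁆⁆ := by
    have hg : ∀ k : Fin n, γ ⁅x, b k⁆ = ∑ j : Fin n, B ⁅x, b j⁆ (b k) • γ (b j) := by
      intro k
      have e : ∀ j : Fin n, B ⁅x, b k⁆ (b j) = -(B ⁅x, b j⁆ (b k)) := by
        intro j
        linear_combination (hinv x (b k) (b j)) - (hsymm (b k) ⁅x, b j⁆)
      have h2 : ∑ j : Fin n, B ⁅x, b j⁆ (b k) • b j = ⁅x, b k⁆ := by
        have h3 := hexpand ⁅x, b k⁆
        simp_rw [e, neg_smul] at h3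
        rw [Finset.sum_neg_distrib] at h3
        exact neg_injective h3
      rw [← h2, map_sum]
      exact Finset.sum_congr rfl fun j _ => (map_smul γ _ _)
    calc ∑ k : Fin n, γ ⁅x, b k⁆ * γ ⁅y, b k⁆
        = ∑ k : Fin n, ∑ j : Fin n, B ⁅x, b j⁆ (b k) • (γ (b j) * γ ⁅y, b k⁆) := by
          refine Finset.sum_congr rfl fun k _ => ?_
          rw [hg k, Finset.sum_mul]
          exact Finset.sum_congr rfl fun j _ => smul_mul_assoc _ _ _
      _ = ∑ j : Fin n, γ (b j) * ∑ k : Fin n, B ⁅x, b j⁆ (b k) • γ ⁅y, b k⁆ := by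
          rw [Finset.sum_comm]
          refine Finset.sum_congr rfl fun j _ => ?_
          rw [Finset.mul_sum]
          exact Finset.sum_congr rfl fun k _ => (mul_smul_comm _ _ _).symm
      _ = -∑ j : Fin n, γ (b j) * γ ⁅y, ⁅x, b j⁆⁆ := by
          rw [← Finset.sum_neg_distrib]
          refine Finset.sum_congr rfl fun j _ => ?_
          have h6 : ∑ k : Fin n, B ⁅x, b j⁆ (b k) • ⁅y, b k⁆ = -⁅y, ⁅x, b j⁆⁆ := by
            have h6' : ⁅y, (∑ k : Fin n, B ⁅x, b j⁆ (b k) • b k : L)⁆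
                = ∑ k : Fin n, B ⁅x, b j⁆ (b k) • ⁅y, b k⁆ := by
              exact hlie y _ _
            rw [← h6', hexpand, lie_neg]
          have h5 : ∑ k : Fin n, B ⁅x, b j⁆ (b k) • γ ⁅y, b k⁆ = -γ ⁅y, ⁅x, b j⁆⁆ := by
            rw [show (∑ k : Fin n, B ⁅x, b j⁆ (b k) • γ ⁅y, b k⁆)
                = γ (∑ k : Fin n, B ⁅x, b j⁆ (b k) • ⁅y, b k⁆) by
              rw [map_sum]
              exact Finset.sum_congr rfl fun k _ => (map_smul γ _ _).symm]
            rw [h6, map_neg]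
          rw [h5, mul_neg]
  -- Leibniz rule for the commutator
  have hterm : ∀ u v : L, adT x * (γ u * γ v) - (γ u * γ v) * adT x
      = γ ⁅x, u⁆ * γ v + γ u * γ ⁅x, v⁆ := by
    intro u v
    calc adT x * (γ u * γ v) - (γ u * γ v) * adT x
        = (adT x * γ u - γ u * adT x) * γ v + γ u * (adT x * γ v - γ v * adT x) := by
          noncomm_ring
      _ = γ ⁅x, u⁆ * γ v + γ u * γ ⁅x, v⁆ := by rw [hcomm1 x u, hcomm1 x v]
  -- main computation
  rw [hadT ⁅x, y⁆]
  conv_rhs => rw [hadT y]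
  rw [mul_smul_comm, smul_mul_assoc, ← smul_sub, Finset.mul_sum, Finset.sum_mul,
    ← Finset.sum_sub_distrib]
  simp_rw [hterm]
  congr 1
  simp_rw [lie_lie, map_sub, mul_sub]
  rw [Finset.sum_sub_distrib, Finset.sum_add_distrib, hswap]
  abel
end

section
/- Let T² = ℝ²/2πℤ² and consider, for real numbers y¹_{(1)}, y²_{(1)}, y¹_{(2)}, y²_{(2)}, the map φ ↦ [exp(iφ y¹_{(1)} h₁) exp(iφ y²_{(1)} h₂), exp(iφ y¹_{(2)} h₁) exp(iφ y²_{(2)} h₂)] into pairs of diagonal 3×3 unitary matrices modulo the simultaneous action (A,B) ~ (Aζ, ζ⁻¹B) of the center ℤ₃ = {I, ω I, ω² I} of SU(3) (ω = e^{2πi/3}), where h₁ = diag(1,-1,0) and h₂ = diag(0,1,-1). This map is 2π-periodic in φ if and only if there exist x ∈ {0,1,2} and integers k¹₁, k²₁, k¹₂, k²₂ such that y¹_{(1)} = k¹₁ + x/3, y²_{(1)} = k²₁ + 2x/3, y¹_{(2)} = k¹₂ + 2x/3, y²_{(2)} = k²₂ + x/3. -/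
open Matrix

/-- `h₁ = diag(1,-1,0)`. -/
def h1 : Matrix (Fin 3) (Fin 3) ℂ := Matrix.diagonal ![1, -1, 0]

/-- `h₂ = diag(0,1,-1)`. -/
def h2 : Matrix (Fin 3) (Fin 3) ℂ := Matrix.diagonal ![0, 1, -1]

/-- The torus element `exp(iφ y¹ h₁) exp(iφ y² h₂)`. -/
noncomputable def torusElt (y1 y2 φ : ℝ) : Matrix (Fin 3) (Fin 3) ℂ :=
  NormedSpace.exp ((((φ * y1 : ℝ) : ℂ) * Complex.I) • h1) *
    NormedSpace.exp ((((φ * y2 : ℝ) : ℂ) * Complex.I) • h2)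

private lemma exp_one_int {t : ℝ} (h : Complex.exp ((t : ℂ) * Complex.I) = 1) :
    ∃ n : ℤ, t = n * (2 * Real.pi) := by
  rw [Complex.exp_eq_one_iff] at h
  obtain ⟨n, hn⟩ := h
  refine ⟨n, ?_⟩
  have h2 : (t : ℂ) * Complex.I = ((n * (2 * Real.pi) : ℝ) : ℂ) * Complex.I := by
    push_cast
    linear_combination hn
  have h3 := mul_right_cancel₀ Complex.I_ne_zero h2
  exact_mod_cast h3

private lemma exp_sub_int {a b : ℝ}
    (h : Complex.exp ((a : ℂ) * Complex.I) = Complex.exp ((b : ℂ) * Complex.I)) :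
    ∃ n : ℤ, a = b + n * (2 * Real.pi) := by
  have h1 : Complex.exp (((a - b : ℝ) : ℂ) * Complex.I) = 1 := by
    rw [show ((a - b : ℝ) : ℂ) * Complex.I = (a : ℂ) * Complex.I + -((b : ℂ) * Complex.I) by
      push_cast; ring, Complex.exp_add, h, Complex.exp_neg,
      mul_inv_cancel₀ (Complex.exp_ne_zero _)]
  obtain ⟨n, hn⟩ := exp_one_int h1
  exact ⟨n, by linarith⟩

private lemma exp_eq_of (a b : ℝ) (n : ℤ) (h : a = b + n * (2 * Real.pi)) :
    Complex.exp ((a : ℂ) * Complex.I) = Complex.exp ((b : ℂ) * Complex.I) := by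
  subst h
  rw [show ((b + n * (2 * Real.pi) : ℝ) : ℂ) * Complex.I
      = (b : ℂ) * Complex.I + (n : ℂ) * (2 * Real.pi * Complex.I) by push_cast; ring,
    Complex.exp_add, Complex.exp_int_mul_two_pi_mul_I, mul_one]

private lemma exp_key (a b1 b2 : ℝ) (n : ℤ) (h : a = b1 + b2 + n * (2 * Real.pi)) :
    Complex.exp ((a : ℂ) * Complex.I)
      = Complex.exp ((b1 : ℂ) * Complex.I) * Complex.exp ((b2 : ℂ) * Complex.I) := by
  rw [← Complex.exp_add,
    show (b1 : ℂ) * Complex.I + (b2 : ℂ) * Complex.I = ((b1 + b2 : ℝ) : ℂ) * Complex.I by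
      push_cast; ring]
  exact exp_eq_of _ _ n (by linarith)

private lemma torusElt_eq (y1 y2 φ : ℝ) :
    torusElt y1 y2 φ = Matrix.diagonal
      ![Complex.exp (((φ * y1 : ℝ) : ℂ) * Complex.I),
        Complex.exp (((φ * (y2 - y1) : ℝ) : ℂ) * Complex.I),
        Complex.exp (((-(φ * y2) : ℝ) : ℂ) * Complex.I)] := by
  unfold torusElt h1 h2
  rw [← Matrix.diagonal_smul, ← Matrix.diagonal_smul, Matrix.exp_diagonal, Matrix.exp_diagonal,
    Matrix.diagonal_mul_diagonal, Matrix.diagonal_eq_diagonal_iff]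
  intro i
  fin_cases i <;>
    simp [Pi.exp_def, ← Complex.exp_eq_exp_ℂ, smul_eq_mul, ← Complex.exp_add] <;>
    · congr 1; push_cast; ring

/-- Proposition 5: the map
`φ ↦ [exp(iφ y¹₍₁₎h₁)exp(iφ y²₍₁₎h₂), exp(iφ y¹₍₂₎h₁)exp(iφ y²₍₂₎h₂)]` into pairs of
diagonal unitaries modulo the simultaneous action `(A,B) ~ (Ac, c⁻¹B)` of the center
`ℤ₃ = {c·I : c³ = 1}` of `SU(3)` is `2π`-periodic in `φ` if and only if there are
`x ∈ {0,1,2}` and integers `kᵇₐ` with `y¹₍₁₎ = k¹₁ + x/3`, `y²₍₁₎ = k²₁ + 2x/3`,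
`y¹₍₂₎ = k¹₂ + 2x/3`, `y²₍₂₎ = k²₂ + x/3`. -/
theorem torus_action_two_pi_periodic_iff (y11 y12 y21 y22 : ℝ) :
    (∀ φ : ℝ, ∃ c : ℂ, c ^ 3 = 1 ∧
        torusElt y11 y12 (φ + 2 * Real.pi) = c • torusElt y11 y12 φ ∧
        torusElt y21 y22 (φ + 2 * Real.pi) = c⁻¹ • torusElt y21 y22 φ) ↔
      ∃ (x k11 k12 k21 k22 : ℤ), (x = 0 ∨ x = 1 ∨ x = 2) ∧
        y11 = k11 + x / 3 ∧ y12 = k12 + 2 * x / 3 ∧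
        y21 = k21 + 2 * x / 3 ∧ y22 = k22 + x / 3 := by
  constructor
  · intro h
    obtain ⟨c, hc3, hA, hB⟩ := h 0
    rw [torusElt_eq, torusElt_eq] at hA
    rw [torusElt_eq, torusElt_eq] at hB
    rw [← Matrix.diagonal_smul, Matrix.diagonal_eq_diagonal_iff] at hA hB
    have e1 : Complex.exp (((2 * Real.pi * y11 : ℝ) : ℂ) * Complex.I) = c := by
      have := hA 0; simp at this
      rw [show ((2 * Real.pi * y11 : ℝ) : ℂ) = ((0 + 2 * Real.pi) * y11 : ℝ) by push_cast; ring]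
      simpa using this
    have e2 : Complex.exp (((2 * Real.pi * (y12 - y11) : ℝ) : ℂ) * Complex.I) = c := by
      have := hA 1; simp at this
      rw [show ((2 * Real.pi * (y12 - y11) : ℝ) : ℂ)
          = ((0 + 2 * Real.pi) * (y12 - y11) : ℝ) by push_cast; ring]
      simpa using this
    have f1 : Complex.exp (((2 * Real.pi * y21 : ℝ) : ℂ) * Complex.I) = c⁻¹ := by
      have := hB 0; simp at this
      rw [show ((2 * Real.pi * y21 : ℝ) : ℂ) = ((0 + 2 * Real.pi) * y21 : ℝ) by push_cast; ring]
      simpa using this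
    have f3 : Complex.exp (((-(2 * Real.pi * y22) : ℝ) : ℂ) * Complex.I) = c⁻¹ := by
      have := hB 2; simp at this
      rw [show ((-(2 * Real.pi * y22) : ℝ) : ℂ) = (-((0 + 2 * Real.pi) * y22) : ℝ) by
        push_cast; ring]
      simpa using this
    have hcinv : c⁻¹ = Complex.exp (((-(2 * Real.pi * y11) : ℝ) : ℂ) * Complex.I) := by
      rw [← e1, ← Complex.exp_neg]
      congr 1; push_cast; ring
    -- 3 y11 ∈ ℤ
    have hpow : Complex.exp (((3 * (2 * Real.pi * y11) : ℝ) : ℂ) * Complex.I) = 1 := by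
      rw [show ((3 * (2 * Real.pi * y11) : ℝ) : ℂ) * Complex.I
          = (3 : ℕ) * (((2 * Real.pi * y11 : ℝ) : ℂ) * Complex.I) by push_cast; ring,
        Complex.exp_nat_mul, e1]
      exact hc3
    obtain ⟨n, hn⟩ := exp_one_int hpow
    have hy11 : 3 * y11 = n := by
      have hpi := Real.pi_pos
      have : 3 * (2 * Real.pi * y11) = n * (2 * Real.pi) := hn
      nlinarith
    obtain ⟨m, hm⟩ := exp_sub_int (e2.trans e1.symm)
    have hy12 : y12 = 2 * y11 + m := by
      have hpi := Real.pi_pos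
      nlinarith [hm]
    obtain ⟨p, hp⟩ := exp_sub_int (f1.trans hcinv)
    have hy21 : y21 = -y11 + p := by
      have hpi := Real.pi_pos
      nlinarith [hp]
    obtain ⟨q, hq⟩ := exp_sub_int (f3.trans hcinv)
    have hy22 : y22 = y11 - q := by
      have hpi := Real.pi_pos
      nlinarith [hq]
    have hdm : (n : ℝ) = 3 * (n / 3 : ℤ) + (n % 3 : ℤ) := by
      exact_mod_cast (Int.mul_ediv_add_emod n 3).symm
    refine ⟨n % 3, n / 3, m + 2 * (n / 3), p - n / 3 - n % 3, n / 3 - q, ?_, ?_, ?_, ?_, ?_⟩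
    · omega
    · push_cast; linarith
    · push_cast; linarith
    · push_cast; linarith
    · push_cast; linarith
  · rintro ⟨x, k11, k12, k21, k22, hx, h11, h12, h21, h22⟩
    subst h11; subst h12; subst h21; subst h22
    intro φ
    refine ⟨Complex.exp (((2 * Real.pi * (x / 3) : ℝ) : ℂ) * Complex.I), ?_, ?_, ?_⟩
    · rw [← Complex.exp_nat_mul,
        show ((3 : ℕ) : ℂ) * (((2 * Real.pi * (x / 3) : ℝ) : ℂ) * Complex.I)
          = (x : ℂ) * (2 * Real.pi * Complex.I) by push_cast; ring]
      exact Complex.exp_int_mul_two_pi_mul_I x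
    · rw [torusElt_eq, torusElt_eq, ← Matrix.diagonal_smul, Matrix.diagonal_eq_diagonal_iff]
      intro i
      fin_cases i <;> simp only [Pi.smul_apply, smul_eq_mul, Matrix.cons_val', Matrix.cons_val_zero,
        Matrix.cons_val_one, Matrix.head_cons, Matrix.empty_val', Matrix.cons_val_fin_one,
        Matrix.head_fin_const, Matrix.cons_val_two, Matrix.tail_cons, Fin.isValue, Fin.mk_one]
      · exact exp_key _ _ _ k11 (by push_cast; ring)
      · exact exp_key _ _ _ (k12 - k11) (by push_cast; ring)
      · exact exp_key _ _ _ (-(k12 + x)) (by push_cast; ring)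
    · have hcinv : (Complex.exp (((2 * Real.pi * (x / 3) : ℝ) : ℂ) * Complex.I))⁻¹
          = Complex.exp (((-(2 * Real.pi * (x / 3)) : ℝ) : ℂ) * Complex.I) := by
        rw [← Complex.exp_neg]; congr 1; push_cast; ring
      rw [torusElt_eq, torusElt_eq, hcinv, ← Matrix.diagonal_smul,
        Matrix.diagonal_eq_diagonal_iff]
      intro i
      fin_cases i <;> simp only [Pi.smul_apply, smul_eq_mul, Matrix.cons_val', Matrix.cons_val_zero,
        Matrix.cons_val_one, Matrix.head_cons, Matrix.empty_val', Matrix.cons_val_fin_one,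
        Matrix.head_fin_const, Matrix.cons_val_two, Matrix.tail_cons, Fin.isValue, Fin.mk_one]
      · exact exp_key _ _ _ (k21 + x) (by push_cast; ring)
      · exact exp_key _ _ _ (k22 - k21) (by push_cast; ring)
      · exact exp_key _ _ _ (-k22) (by push_cast; ring)
end
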